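/- Let L ∈ ℕ, k > 0, a = (a_0, …, a_L) ∈ ℝ^{L+1}, and λ > 0. Then the derivative with respect to λ of g(a, λ) equals e^{−2λ} · yᵀ( (e^{λ}/k)·D + 1·zᵀ + z·1ᵀ )·y, where y, z ∈ ℝ^{L+1} are given by y_i = a_i λ^i and z_i = i/λ − 1 for i = 0, …, L, 1 ∈ ℝ^{L+1} is the all-ones vector, and D is the (L+1)×(L+1) diagonal matrix with D_{ii} = (i/λ − 1)·i!/λ^i. -/

import Mathlib

open Finset Matrix

/-- `P L a x = ∑_{l=0}^L a_l x^l`. -/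
noncomputable def P (L : ℕ) (a : ℕ → ℝ) (x : ℝ) : ℝ :=
  ∑ l ∈ range (L + 1), a l * x ^ l

/-- `g(a, λ) = (1/k)·∑_{l=0}^L e^{−λ} a_l² λ^l l! + (e^{−λ} P_L(λ, a))²`. -/
noncomputable def g (k : ℝ) (L : ℕ) (a : ℕ → ℝ) (x : ℝ) : ℝ :=
  (1 / k) * (∑ l ∈ range (L + 1),
      Real.exp (-x) * (a l) ^ 2 * x ^ l * (l.factorial : ℝ))
    + (Real.exp (-x) * P L a x) ^ 2

theorem stmt_3 (L : ℕ) (k : ℝ) (hk : 0 < k) (a : ℕ → ℝ) (x : ℝ) (hx : 0 < x) :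
    HasDerivAt (g k L a)
      (Real.exp (-(2 * x)) *
        dotProduct (fun i : Fin (L + 1) => a i * x ^ (i : ℕ))
          (Matrix.mulVec
            ((Real.exp x / k) •
                Matrix.diagonal
                  (fun i : Fin (L + 1) =>
                    (((i : ℕ) : ℝ) / x - 1) * ((i : ℕ).factorial : ℝ) / x ^ (i : ℕ)) +
              (Matrix.vecMulVec (fun _ : Fin (L + 1) => (1 : ℝ))
                  (fun i : Fin (L + 1) => ((i : ℕ) : ℝ) / x - 1) +
                Matrix.vecMulVec (fun i : Fin (L + 1) => ((i : ℕ) : ℝ) / x - 1)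
                  (fun _ : Fin (L + 1) => (1 : ℝ))))
            (fun i : Fin (L + 1) => a i * x ^ (i : ℕ)))) x := by
  have hx0 : x ≠ 0 := ne_of_gt hx
  have hk0 : k ≠ 0 := ne_of_gt hk
  have hexp : HasDerivAt (fun t : ℝ => Real.exp (-t)) (-Real.exp (-x)) x := by
    simpa [Function.comp_def] using (Real.hasDerivAt_exp (-x)).comp x (hasDerivAt_neg x)
  set q : ℝ := ∑ l ∈ range (L + 1), a l * ((l : ℝ) * x ^ (l - 1)) with hq
  have hP : HasDerivAt (fun t => P L a t) q x := by
    apply HasDerivAt.fun_sum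
    intro l _
    exact (hasDerivAt_pow l x).const_mul (a l)
  have hsum : HasDerivAt
      (fun t => ∑ l ∈ range (L + 1), Real.exp (-t) * (a l) ^ 2 * t ^ l * (l.factorial : ℝ))
      (∑ l ∈ range (L + 1),
        ((-Real.exp (-x) * (a l) ^ 2) * x ^ l
          + (Real.exp (-x) * (a l) ^ 2) * ((l : ℝ) * x ^ (l - 1))) * (l.factorial : ℝ)) x := by
    apply HasDerivAt.fun_sum
    intro l _
    exact ((hexp.mul_const ((a l) ^ 2)).mul (hasDerivAt_pow l x)).mul_const _
  have hg : HasDerivAt (g k L a)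
      ((1 / k) * ∑ l ∈ range (L + 1),
        ((-Real.exp (-x) * (a l) ^ 2) * x ^ l
          + (Real.exp (-x) * (a l) ^ 2) * ((l : ℝ) * x ^ (l - 1))) * (l.factorial : ℝ)
        + 2 * (Real.exp (-x) * P L a x) ^ 1
            * (-Real.exp (-x) * P L a x + Real.exp (-x) * q)) x := by
    exact (hsum.const_mul (1 / k)).add ((hexp.mul hP).pow 2)
  convert hg using 1
  set y : Fin (L + 1) → ℝ := fun i => a i * x ^ (i : ℕ) with hy
  set z : Fin (L + 1) → ℝ := fun i => ((i : ℕ) : ℝ) / x - 1 with hz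
  have hzy : ∀ i : Fin (L + 1), z i * y i
      = a i * (((i : ℕ) : ℝ) * x ^ ((i : ℕ) - 1)) - a i * x ^ (i : ℕ) := by
    intro i
    simp only [hz, hy]
    rcases Nat.eq_zero_or_pos (i : ℕ) with h | h
    · simp [h]
    · obtain ⟨m, hm⟩ := Nat.exists_eq_succ_of_ne_zero (Nat.pos_iff_ne_zero.mp h)
      rw [hm]
      simp only [Nat.succ_sub_one, Nat.succ_eq_add_one]
      field_simp
      ring
  have hsumz : ∑ i : Fin (L + 1), z i * y i = q - P L a x := by
    calc ∑ i : Fin (L + 1), z i * y i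
        = ∑ i : Fin (L + 1),
            (a (i : ℕ) * (((i : ℕ) : ℝ) * x ^ ((i : ℕ) - 1)) - a (i : ℕ) * x ^ (i : ℕ)) :=
          Finset.sum_congr rfl (fun i _ => hzy i)
      _ = ∑ i ∈ range (L + 1), (a i * ((i : ℝ) * x ^ (i - 1)) - a i * x ^ i) :=
          Fin.sum_univ_eq_sum_range
            (fun n => a n * ((n : ℝ) * x ^ (n - 1)) - a n * x ^ n) (L + 1)
      _ = q - P L a x := by rw [hq, P, Finset.sum_sub_distrib]
  have hsumy : ∑ i : Fin (L + 1), y i = P L a x := by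
    rw [P]; exact Fin.sum_univ_eq_sum_range (fun i => a i * x ^ i) _
  rw [Matrix.add_mulVec, Matrix.add_mulVec, dotProduct_add, dotProduct_add]
  have hd1 : dotProduct y (((Real.exp x / k) •
      Matrix.diagonal (fun i : Fin (L + 1) =>
        (((i : ℕ) : ℝ) / x - 1) * ((i : ℕ).factorial : ℝ) / x ^ (i : ℕ))) *ᵥ y)
      = ∑ i : Fin (L + 1), (Real.exp x / k) *
          ((z i * ((i : ℕ).factorial : ℝ) / x ^ (i : ℕ)) * (y i * y i)) := by
    rw [dotProduct]
    apply Finset.sum_congr rfl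
    intro i _
    rw [Matrix.smul_mulVec, Pi.smul_apply, Matrix.mulVec_diagonal]
    simp only [smul_eq_mul, hz]
    ring
  have hrow1 : ∀ i : Fin (L + 1),
      ((Matrix.vecMulVec (fun _ : Fin (L + 1) => (1 : ℝ)) z) *ᵥ y) i
        = ∑ j : Fin (L + 1), z j * y j := by
    intro i
    simp [Matrix.mulVec, dotProduct, Matrix.vecMulVec_apply]
  have hrow2 : ∀ i : Fin (L + 1),
      ((Matrix.vecMulVec z (fun _ : Fin (L + 1) => (1 : ℝ))) *ᵥ y) i
        = z i * ∑ j : Fin (L + 1), y j := by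
    intro i
    simp [Matrix.mulVec, dotProduct, Matrix.vecMulVec_apply, Finset.mul_sum]
  have hd2 : dotProduct y ((Matrix.vecMulVec (fun _ : Fin (L + 1) => (1 : ℝ)) z) *ᵥ y)
      = (∑ i : Fin (L + 1), y i) * (∑ i : Fin (L + 1), z i * y i) := by
    rw [dotProduct, Finset.sum_mul]
    apply Finset.sum_congr rfl
    intro i _
    rw [hrow1 i]
  have hd3 : dotProduct y ((Matrix.vecMulVec z (fun _ : Fin (L + 1) => (1 : ℝ))) *ᵥ y)
      = (∑ i : Fin (L + 1), z i * y i) * (∑ i : Fin (L + 1), y i) := by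
    rw [dotProduct, Finset.sum_mul]
    apply Finset.sum_congr rfl
    intro i _
    rw [hrow2 i]
    ring
  rw [hd1, hd2, hd3, hsumz, hsumy]
  have hE : Real.exp (-(2 * x)) * Real.exp x = Real.exp (-x) := by
    rw [← Real.exp_add]; congr 1; ring
  have hdiag : ∀ i : Fin (L + 1),
      Real.exp (-(2 * x)) * ((Real.exp x / k) *
        ((z i * ((i : ℕ).factorial : ℝ) / x ^ (i : ℕ)) * (y i * y i)))
      = (1 / k) * (((-Real.exp (-x) * (a (i : ℕ)) ^ 2) * x ^ (i : ℕ)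
          + (Real.exp (-x) * (a (i : ℕ)) ^ 2) * (((i : ℕ) : ℝ) * x ^ ((i : ℕ) - 1)))
            * ((i : ℕ).factorial : ℝ)) := by
    intro i
    have hzyi := hzy i
    calc Real.exp (-(2 * x)) * ((Real.exp x / k) *
          ((z i * ((i : ℕ).factorial : ℝ) / x ^ (i : ℕ)) * (y i * y i)))
        = (Real.exp (-(2 * x)) * Real.exp x) * (1 / k) * ((i : ℕ).factorial : ℝ)
            * ((z i * y i) * (y i / x ^ (i : ℕ))) := by
          field_simp
      _ = Real.exp (-x) * (1 / k) * ((i : ℕ).factorial : ℝ)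
            * ((a (i : ℕ) * (((i : ℕ) : ℝ) * x ^ ((i : ℕ) - 1)) - a (i : ℕ) * x ^ (i : ℕ))
                * a (i : ℕ)) := by
          rw [hE, hzyi]
          congr 2
          simp only [hy]
          field_simp
      _ = _ := by ring
  rw [mul_add, Finset.mul_sum, Finset.sum_congr rfl (fun i _ => hdiag i)]
  have hfin : ∑ i : Fin (L + 1),
      (1 / k) * (((-Real.exp (-x) * (a (i : ℕ)) ^ 2) * x ^ (i : ℕ)
          + (Real.exp (-x) * (a (i : ℕ)) ^ 2) * (((i : ℕ) : ℝ) * x ^ ((i : ℕ) - 1)))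
            * ((i : ℕ).factorial : ℝ))
      = ∑ l ∈ range (L + 1),
          (1 / k) * (((-Real.exp (-x) * (a l) ^ 2) * x ^ l
            + (Real.exp (-x) * (a l) ^ 2) * ((l : ℝ) * x ^ (l - 1))) * (l.factorial : ℝ)) :=
    Fin.sum_univ_eq_sum_range
      (fun l => (1 / k) * (((-Real.exp (-x) * (a l) ^ 2) * x ^ l
        + (Real.exp (-x) * (a l) ^ 2) * ((l : ℝ) * x ^ (l - 1))) * (l.factorial : ℝ))) (L + 1)
  rw [hfin, ← Finset.mul_sum]
  have hE2 : Real.exp (-(2 * x)) = Real.exp (-x) * Real.exp (-x) := by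
    rw [← Real.exp_add]; congr 1; ring
  rw [hE2]
  ring
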